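/- PAV satisfies EJR under matroid constraints: in an approval election (C, N, 𝓕) with 𝓕 a matroid, every outcome W maximizing the PAV score Σ_{i∈N} H(|W ∩ A_i|) over 𝓕 (where H(k) = Σ_{j=1}^k 1/j) satisfies extended justified representation. -/

import Mathlib

open Finset

/-- A group `S` deserves `ℓ` candidates. -/
def Deserves {C N : Type*} [DecidableEq C] [Fintype N] (F : Set (Finset C))
    (A : N → Finset C) (S : Finset N) (ℓ : ℕ) : Prop :=
  ∀ T ∈ F, (∃ X : Finset C, (∀ i ∈ S, X ⊆ A i) ∧ ℓ ≤ X.card ∧ T ∪ X ∈ F) ∨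
    (S.card : ℝ) / (Fintype.card N : ℝ) > (ℓ : ℝ) / ((T.card : ℝ) + (ℓ : ℝ))

/-- The PAV score of `W`: `∑ᵢ H(|W ∩ Aᵢ|)` where `H(k) = ∑_{j=1}^k 1/j`. -/
noncomputable def pavScore {C N : Type*} [DecidableEq C] [Fintype N]
    (A : N → Finset C) (W : Finset C) : ℝ :=
  ∑ i : N, ∑ j ∈ Finset.range ((W ∩ A i).card), (1 : ℝ) / (j + 1)

private noncomputable def hsum (k : ℕ) : ℝ := ∑ j ∈ Finset.range k, (1:ℝ)/(j+1)

private lemma hsum_succ (k : ℕ) : hsum (k+1) = hsum k + 1/(k+1) := by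
  simp [hsum, Finset.sum_range_succ]

private lemma hsum_mono : Monotone hsum := by
  intro a b hab
  exact Finset.sum_le_sum_of_subset_of_nonneg (Finset.range_subset_range.2 hab)
    (by intro j _ _; positivity)

private lemma aug {C : Type*} [DecidableEq C] {F : Set (Finset C)}
    (hex : ∀ X ∈ F, ∀ Y ∈ F, X.card < Y.card → ∃ c ∈ Y \ X, insert c X ∈ F) :
    ∀ (k : ℕ) (Z Wt : Finset C), Z ∈ F → Wt ∈ F → Z.card + k = Wt.card →
      ∃ Z', Z' ∈ F ∧ Z ⊆ Z' ∧ Z' ⊆ Z ∪ Wt ∧ Z'.card = Wt.card := by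
  intro k
  induction k with
  | zero => exact fun Z Wt hZ hWt h => ⟨Z, hZ, subset_rfl, subset_union_left, by omega⟩
  | succ k ih =>
    intro Z Wt hZ hWt h
    obtain ⟨c, hc, hcF⟩ := hex Z hZ Wt hWt (by omega)
    obtain ⟨hcW, hcZ⟩ := Finset.mem_sdiff.1 hc
    obtain ⟨Z', h1, h2, h3, h4⟩ := ih (insert c Z) Wt hcF hWt
      (by rw [Finset.card_insert_of_notMem hcZ]; omega)
    refine ⟨Z', h1, (Finset.subset_insert _ _).trans h2, h3.trans ?_, h4⟩
    intro x hx
    simp only [Finset.mem_union, Finset.mem_insert] at hx ⊢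
    rcases hx with (h | h) | h
    · subst h; exact Or.inr hcW
    · exact Or.inl h
    · exact Or.inr h

/-- PAV satisfies EJR under matroid constraints: every feasible outcome maximizing the
PAV score satisfies extended justified representation. -/
theorem stmt13 {C N : Type*} [DecidableEq C] [Fintype N]
    (F : Set (Finset C)) (A : N → Finset C)
    (hne : F.Nonempty) (hdc : ∀ X ∈ F, ∀ Y : Finset C, Y ⊆ X → Y ∈ F)
    (hex : ∀ X ∈ F, ∀ Y ∈ F, X.card < Y.card → ∃ c ∈ Y \ X, insert c X ∈ F)
    (W : Finset C) (hW : W ∈ F)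
    (hmax : ∀ W' ∈ F, pavScore A W' ≤ pavScore A W) :
    ∀ ℓ : ℕ, ∀ S : Finset N, S.Nonempty → Deserves F A S ℓ →
      ∃ i ∈ S, ℓ ≤ (A i ∩ W).card := by
  classical
  intro ℓ S hS hDes
  by_contra hcon
  push_neg at hcon
  obtain ⟨i₀, hi₀⟩ := hS
  have hn : 0 < Fintype.card N := Fintype.card_pos_iff.2 ⟨i₀⟩
  have hℓ : 1 ≤ ℓ := by have := hcon i₀ hi₀; omega
  have hpav : ∀ V : Finset C, pavScore A V = ∑ i : N, hsum ((V ∩ A i).card) := fun V => rfl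
  have hcon' : ∀ i ∈ S, (W ∩ A i).card + 1 ≤ ℓ := by
    intro i hi; have := hcon i hi; rw [Finset.inter_comm] at this; omega
  set Com : C → Prop := fun c => ∀ i ∈ S, c ∈ A i with hComdef
  set M : Finset C := W.filter Com with hMdef
  set D : Finset C := W.filter (fun w => ∃ c, Com c ∧ c ∉ W ∧ insert c (W.erase w) ∈ F) with hDdef
  set B : Finset C := D ∪ M with hBdef
  have hDW : D ⊆ W := Finset.filter_subset _ _
  have hMW : M ⊆ W := Finset.filter_subset _ _
  have hBW : B ⊆ W := Finset.union_subset hDW hMW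
  have hBF : B ∈ F := hdc W hW B hBW
  have hMcard : M.card + 1 ≤ ℓ := by
    have h1 : M ⊆ W ∩ A i₀ := by
      intro x hx
      rw [hMdef, Finset.mem_filter] at hx
      exact Finset.mem_inter.2 ⟨hx.1, hx.2 i₀ hi₀⟩
    have := Finset.card_le_card h1
    have := hcon' i₀ hi₀
    omega
  -- no common candidate can be added
  have hADD : ∀ c, Com c → c ∉ W → insert c W ∉ F := by
    intro c hc hcW hins
    have hkey : ∀ i : N, (insert c W ∩ A i).card =
        (W ∩ A i).card + (if c ∈ A i then 1 else 0) := by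
      intro i
      by_cases hci : c ∈ A i
      · rw [Finset.insert_inter_of_mem hci,
          Finset.card_insert_of_notMem (fun h => hcW (Finset.mem_inter.1 h).1)]
        simp [hci]
      · rw [Finset.insert_inter_of_notMem hci]; simp [hci]
    have hlt : pavScore A W < pavScore A (insert c W) := by
      rw [hpav, hpav]
      apply Finset.sum_lt_sum
      · intro i _
        exact hsum_mono (by rw [hkey i]; omega)
      · refine ⟨i₀, Finset.mem_univ i₀, ?_⟩
        rw [hkey i₀, if_pos (hc i₀ hi₀), hsum_succ]
        have : (0:ℝ) < 1 / ((W ∩ A i₀).card + 1) := by positivity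
        linarith
    exact absurd (hmax _ hins) (not_le.2 hlt)
  -- L2: any feasible set of D-or-common elements has card ≤ B.card
  have hL2 : ∀ Y, Y ∈ F → (∀ y ∈ Y, y ∈ D ∨ Com y) → Y.card ≤ B.card := by
    intro Y hYF hYmem
    by_contra hlt
    push_neg at hlt
    obtain ⟨c, hc, hcF⟩ := hex B hBF Y hYF hlt
    obtain ⟨hcY, hcB⟩ := Finset.mem_sdiff.1 hc
    have hcCom : Com c := by
      rcases hYmem c hcY with h | h
      · exact absurd (Finset.mem_union_left M h) hcB
      · exact h
    have hcW : c ∉ W := fun hcW =>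
      hcB (Finset.mem_union_right D (Finset.mem_filter.2 ⟨hcW, hcCom⟩))
    have hBltW : B.card < W.card := by
      rcases lt_or_eq_of_le (Finset.card_le_card hBW) with h | h
      · exact h
      · exfalso
        have hBeq : B = W := Finset.eq_of_subset_of_card_le hBW (le_of_eq h.symm)
        rw [hBeq] at hcF
        exact hADD c hcCom hcW hcF
    have hIcard : (insert c B).card = B.card + 1 := Finset.card_insert_of_notMem hcB
    obtain ⟨Z, hZF, hZsub, hZsub2, hZcard⟩ :=
      aug hex (W.card - (B.card + 1)) (insert c B) W hcF hW (by omega)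
    have hcZ : c ∈ Z := hZsub (Finset.mem_insert_self c B)
    have hZe : Z.erase c ⊆ W := by
      intro x hx
      obtain ⟨hxc, hxZ⟩ := Finset.mem_erase.1 hx
      rcases Finset.mem_union.1 (hZsub2 hxZ) with h | h
      · rcases Finset.mem_insert.1 h with h | h
        · exact absurd h hxc
        · exact hBW h
      · exact h
    have hZecard : (Z.erase c).card = W.card - 1 := by
      rw [Finset.card_erase_of_mem hcZ, hZcard]
    have hWne : (W \ Z.erase c).Nonempty := by
      rw [← Finset.card_pos, Finset.card_sdiff_of_subset hZe]
      omega
    obtain ⟨w, hw⟩ := hWne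
    obtain ⟨hwW, hwZ⟩ := Finset.mem_sdiff.1 hw
    have hWeq : W.erase w = Z.erase c := by
      symm
      apply Finset.eq_of_subset_of_card_le
      · intro x hx
        exact Finset.mem_erase.2 ⟨fun hxw => hwZ (hxw ▸ hx), hZe hx⟩
      · rw [Finset.card_erase_of_mem hwW, hZecard]
    have hswap : insert c (W.erase w) ∈ F := by
      apply hdc Z hZF
      rw [hWeq]
      intro x hx
      rcases Finset.mem_insert.1 hx with h | h
      · exact h ▸ hcZ
      · exact (Finset.erase_subset c Z) h
    have hwB : w ∉ B := by
      intro hwB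
      apply hwZ
      exact Finset.mem_erase.2 ⟨fun hwc => hcW (hwc ▸ hwW), hZsub (Finset.mem_insert_of_mem hwB)⟩
    exact hwB (Finset.mem_union_left M (Finset.mem_filter.2 ⟨hwW, ⟨c, hcCom, hcW, hswap⟩⟩))
  by_cases hAB : S.card * (B.card + 1) ≤ ℓ * Fintype.card N
  · -- Case A
    set t : ℕ := B.card + 1 - ℓ with htdef
    have hMB : M ⊆ B := Finset.subset_union_right
    have hb1 : (B \ M).card = B.card - M.card := Finset.card_sdiff_of_subset hMB
    have hMleB : M.card ≤ B.card := Finset.card_le_card hMB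
    have htB : t ≤ B.card := by omega
    obtain ⟨T₁, hT₁sub, hT₁card⟩ := Finset.exists_subset_card_eq (s := B \ M) (n := min t ((B \ M).card))
      (min_le_right _ _)
    obtain ⟨T₂, hT₂sub, hT₂card⟩ := Finset.exists_subset_card_eq (s := M) (n := t - (B \ M).card)
      (by omega)
    set T : Finset C := T₁ ∪ T₂ with hTdef
    have hdisj : Disjoint T₁ T₂ := by
      apply Finset.disjoint_left.2
      intro x hx1 hx2
      exact (Finset.mem_sdiff.1 (hT₁sub hx1)).2 (hT₂sub hx2)
    have hTcard : T.card = t := by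
      rw [hTdef, Finset.card_union_of_disjoint hdisj, hT₁card, hT₂card]
      omega
    have hTW : T ⊆ W := by
      intro x hx
      rcases Finset.mem_union.1 hx with h | h
      · exact hBW ((Finset.mem_sdiff.1 (hT₁sub h)).1)
      · exact hMW (hT₂sub h)
    have hTF : T ∈ F := hdc W hW T hTW
    have hsn : S.card ≤ Fintype.card N := Finset.card_le_univ S
    rcases hDes T hTF with ⟨X, hXA, hXc, hTXF⟩ | hbig
    · -- extension exists: contradiction via hL2
      have hYcard : (T ∪ X).card ≤ B.card := by
        apply hL2 _ hTXF
        intro y hy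
        rcases Finset.mem_union.1 hy with h | h
        · rcases Finset.mem_union.1 h with h1 | h1
          · rcases Finset.mem_union.1 (Finset.mem_sdiff.1 (hT₁sub h1)).1 with h2 | h2
            · exact Or.inl h2
            · exact absurd h2 (Finset.mem_sdiff.1 (hT₁sub h1)).2
          · exact Or.inr (Finset.mem_filter.1 (hT₂sub h1)).2
        · exact Or.inr (fun i hi => hXA i hi h)
      have hXsT : (X \ T).card ≤ B.card - t := by
        have h1 : T ∪ X = T ∪ (X \ T) := (Finset.union_sdiff_self_eq_union).symm
        have h2 : (T ∪ (X \ T)).card = T.card + (X \ T).card :=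
          Finset.card_union_of_disjoint Finset.disjoint_sdiff
        rw [h1, h2, hTcard] at hYcard
        omega
      have hXiT : (X ∩ T).card ≤ t - (B \ M).card := by
        rw [← hT₂card]
        apply Finset.card_le_card
        intro x hx
        obtain ⟨hxX, hxT⟩ := Finset.mem_inter.1 hx
        rcases Finset.mem_union.1 hxT with h | h
        · exfalso
          apply (Finset.mem_sdiff.1 (hT₁sub h)).2
          exact Finset.mem_filter.2 ⟨hTW hxT, fun i hi => hXA i hi hxX⟩
        · exact h
      have hXsplit : (X ∩ T).card + (X \ T).card = X.card :=
        Finset.card_inter_add_card_sdiff X T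
      omega
    · -- large group: contradicts hAB
      have hnat : S.card * (T.card + ℓ) ≤ ℓ * Fintype.card N := by
        rw [hTcard]
        by_cases hle : ℓ ≤ B.card + 1
        · have : t + ℓ = B.card + 1 := by omega
          rw [this]; exact hAB
        · have : t = 0 := by omega
          rw [this]
          calc S.card * (0 + ℓ) = S.card * ℓ := by ring
            _ ≤ Fintype.card N * ℓ := Nat.mul_le_mul_right ℓ hsn
            _ = ℓ * Fintype.card N := Nat.mul_comm _ _
      rw [gt_iff_lt, div_lt_div_iff₀ (by positivity) (by exact_mod_cast hn)] at hbig
      have : (ℓ : ℝ) * (Fintype.card N : ℝ) < (S.card : ℝ) * ((T.card : ℝ) + (ℓ : ℝ)) := hbig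
      have hc2 : (ℓ : ℝ) * (Fintype.card N : ℝ) < ((S.card * (T.card + ℓ) : ℕ) : ℝ) := by
        push_cast
        linarith
      have : ℓ * Fintype.card N < S.card * (T.card + ℓ) := by exact_mod_cast hc2
      omega
  · -- Case B
    push_neg at hAB
    have hDmem : ∀ w ∈ D, ∃ c, Com c ∧ c ∉ W ∧ insert c (W.erase w) ∈ F := by
      intro w hw; exact (Finset.mem_filter.1 hw).2
    choose! f hf1 hf2 hf3 using hDmem
    have hcards : ∀ w ∈ D, ∀ i : N, ((insert (f w) (W.erase w)) ∩ A i).card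
        = (W ∩ A i).card + (if f w ∈ A i then 1 else 0) - (if w ∈ A i then 1 else 0) := by
      intro w hw i
      have hwW : w ∈ W := hDW hw
      have hfwW : f w ∉ W := hf2 w hw
      have hfwe : f w ∉ (W.erase w) ∩ A i := fun h =>
        hfwW (Finset.mem_of_mem_erase (Finset.mem_inter.1 h).1)
      have herase : (W.erase w) ∩ A i = (W ∩ A i).erase w := Finset.erase_inter w W (A i)
      by_cases hwi : w ∈ A i
      · have hwmem : w ∈ W ∩ A i := Finset.mem_inter.2 ⟨hwW, hwi⟩
        have hpos : 1 ≤ (W ∩ A i).card := Finset.card_pos.2 ⟨w, hwmem⟩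
        by_cases hfi : f w ∈ A i
        · rw [Finset.insert_inter_of_mem hfi, Finset.card_insert_of_notMem hfwe, herase,
            Finset.card_erase_of_mem hwmem]
          simp only [if_pos hwi, if_pos hfi]
          omega
        · rw [Finset.insert_inter_of_notMem hfi, herase, Finset.card_erase_of_mem hwmem]
          simp only [if_pos hwi, if_neg hfi]
          omega
      · have hwmem : w ∉ W ∩ A i := fun h => hwi (Finset.mem_inter.1 h).2
        by_cases hfi : f w ∈ A i
        · rw [Finset.insert_inter_of_mem hfi, Finset.card_insert_of_notMem hfwe, herase,
            Finset.erase_eq_of_notMem hwmem]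
          simp only [if_pos hfi, if_neg hwi]
          omega
        · rw [Finset.insert_inter_of_notMem hfi, herase, Finset.erase_eq_of_notMem hwmem]
          simp only [if_neg hfi, if_neg hwi]
          omega
    have hlow : ∀ w ∈ D,
        (∑ i ∈ S, (if w ∈ A i then (0:ℝ) else 1/(ℓ:ℝ)))
          - (∑ i ∈ Sᶜ, (if w ∈ A i then 1/(((W ∩ A i).card : ℝ)) else 0))
        ≤ pavScore A (insert (f w) (W.erase w)) - pavScore A W := by
      intro w hw
      rw [hpav, hpav, ← Finset.sum_sub_distrib,
        ← Finset.sum_add_sum_compl S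
          (fun i => hsum ((insert (f w) (W.erase w) ∩ A i).card) - hsum ((W ∩ A i).card))]
      have hp1 : ∀ i ∈ S, (if w ∈ A i then (0:ℝ) else 1/(ℓ:ℝ))
          ≤ hsum ((insert (f w) (W.erase w) ∩ A i).card) - hsum ((W ∩ A i).card) := by
        intro i hi
        have hfi : f w ∈ A i := hf1 w hw i hi
        have hcd := hcards w hw i
        rw [if_pos hfi] at hcd
        by_cases hwi : w ∈ A i
        · rw [if_pos hwi] at hcd ⊢
          have heq : (insert (f w) (W.erase w) ∩ A i).card = (W ∩ A i).card := by omega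
          rw [heq]
          simp
        · rw [if_neg hwi] at hcd ⊢
          have heq : (insert (f w) (W.erase w) ∩ A i).card = (W ∩ A i).card + 1 := by omega
          rw [heq, hsum_succ]
          have hle : ((W ∩ A i).card : ℝ) + 1 ≤ (ℓ:ℝ) := by exact_mod_cast hcon' i hi
          have h1 : 1/(ℓ:ℝ) ≤ 1/(((W ∩ A i).card : ℝ) + 1) :=
            one_div_le_one_div_of_le (Nat.cast_add_one_pos _) hle
          linarith
      have hp2 : ∀ i ∈ Sᶜ, -(if w ∈ A i then 1/(((W ∩ A i).card : ℝ)) else 0)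
          ≤ hsum ((insert (f w) (W.erase w) ∩ A i).card) - hsum ((W ∩ A i).card) := by
        intro i _
        have hcd := hcards w hw i
        by_cases hwi : w ∈ A i
        · have hwmem : w ∈ W ∩ A i := Finset.mem_inter.2 ⟨hDW hw, hwi⟩
          have hpos : 1 ≤ (W ∩ A i).card := Finset.card_pos.2 ⟨w, hwmem⟩
          rw [if_pos hwi] at hcd ⊢
          by_cases hfi : f w ∈ A i
          · rw [if_pos hfi] at hcd
            have heq : (insert (f w) (W.erase w) ∩ A i).card = (W ∩ A i).card := by omega
            rw [heq]
            have hnn : (0:ℝ) ≤ 1/(((W ∩ A i).card : ℝ)) := div_nonneg zero_le_one (Nat.cast_nonneg _)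
            linarith
          · rw [if_neg hfi] at hcd
            have heq : (insert (f w) (W.erase w) ∩ A i).card = (W ∩ A i).card - 1 := by omega
            rw [heq]
            have hs : hsum ((W ∩ A i).card)
                = hsum ((W ∩ A i).card - 1) + 1/((((W ∩ A i).card - 1 : ℕ) : ℝ) + 1) := by
              conv_lhs => rw [show (W ∩ A i).card = ((W ∩ A i).card - 1) + 1 by omega]
              rw [hsum_succ]
            have hcast : ((((W ∩ A i).card - 1 : ℕ)) : ℝ) + 1 = ((W ∩ A i).card : ℝ) := by
              have h9 : (((W ∩ A i).card - 1 : ℕ) : ℝ) = ((W ∩ A i).card : ℝ) - 1 := by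
                push_cast [Nat.cast_sub hpos]
                ring
              rw [h9]; ring
            rw [hs, hcast]
            linarith
        · rw [if_neg hwi] at hcd ⊢
          have hle : (W ∩ A i).card ≤ (insert (f w) (W.erase w) ∩ A i).card := by omega
          have := hsum_mono hle
          simp only [neg_zero]
          linarith
      have h1 := Finset.sum_le_sum hp1
      have h2 := Finset.sum_le_sum hp2
      rw [Finset.sum_neg_distrib] at h2
      linarith
    have hub : ∑ w ∈ D, (pavScore A (insert (f w) (W.erase w)) - pavScore A W) ≤ 0 := by
      apply Finset.sum_nonpos
      intro w hw
      have := hmax _ (hf3 w hw)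
      linarith
    have hlower := Finset.sum_le_sum hlow
    rw [Finset.sum_sub_distrib] at hlower
    have e1 : (∑ w ∈ D, ∑ i ∈ S, (if w ∈ A i then (0:ℝ) else 1/(ℓ:ℝ)))
        = ∑ i ∈ S, ∑ w ∈ D, (if w ∈ A i then (0:ℝ) else 1/(ℓ:ℝ)) := Finset.sum_comm
    have e2 : (∑ w ∈ D, ∑ i ∈ Sᶜ, (if w ∈ A i then 1/(((W ∩ A i).card : ℝ)) else 0))
        = ∑ i ∈ Sᶜ, ∑ w ∈ D, (if w ∈ A i then 1/(((W ∩ A i).card : ℝ)) else 0) :=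
      Finset.sum_comm
    rw [e1, e2] at hlower
    have hlpos : (0:ℝ) < (ℓ:ℝ) := by exact_mod_cast hℓ
    have hgain : ∀ i ∈ S, (((B.card:ℝ) + 1)/(ℓ:ℝ) - 1)
        ≤ ∑ w ∈ D, (if w ∈ A i then (0:ℝ) else 1/(ℓ:ℝ)) := by
      intro i hi
      rw [Finset.sum_ite, Finset.sum_const_zero, Finset.sum_const, zero_add, nsmul_eq_mul]
      have hfn : B.card + 1 ≤ (D.filter (fun w => ¬ w ∈ A i)).card + ℓ := by
        have hsplit : (D.filter (fun w => w ∈ A i)).card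
            + (D.filter (fun w => ¬ w ∈ A i)).card = D.card :=
          Finset.card_filter_add_card_filter_not _
        have hdisj2 : Disjoint (D.filter (fun w => w ∈ A i)) (M \ D) := by
          apply Finset.disjoint_left.2
          intro x hx1 hx2
          exact (Finset.mem_sdiff.1 hx2).2 (Finset.filter_subset _ _ hx1)
        have hsub2 : (D.filter (fun w => w ∈ A i)) ∪ (M \ D) ⊆ W ∩ A i := by
          intro x hx
          rcases Finset.mem_union.1 hx with h | h
          · have hx' := Finset.mem_filter.1 h
            exact Finset.mem_inter.2 ⟨hDW hx'.1, hx'.2⟩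
          · have hxM := Finset.mem_filter.1 (Finset.mem_sdiff.1 h).1
            exact Finset.mem_inter.2 ⟨hxM.1, hxM.2 i hi⟩
        have h2 := Finset.card_le_card hsub2
        rw [Finset.card_union_of_disjoint hdisj2] at h2
        have hBcard : B.card = D.card + (M \ D).card := by
          rw [hBdef, ← Finset.union_sdiff_self_eq_union,
            Finset.card_union_of_disjoint Finset.disjoint_sdiff]
        have hai := hcon' i hi
        omega
      have hr : ((B.card:ℝ) + 1) ≤ ((D.filter (fun w => ¬ w ∈ A i)).card : ℝ) + (ℓ:ℝ) := by
        exact_mod_cast hfn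
      have h3 : ((B.card:ℝ) + 1)/(ℓ:ℝ)
          ≤ (((D.filter (fun w => ¬ w ∈ A i)).card : ℝ) + (ℓ:ℝ))/(ℓ:ℝ) := by
        gcongr
      have h4 : (((D.filter (fun w => ¬ w ∈ A i)).card : ℝ) + (ℓ:ℝ))/(ℓ:ℝ)
          = ((D.filter (fun w => ¬ w ∈ A i)).card : ℝ) * (1/(ℓ:ℝ)) + 1 := by
        field_simp
      rw [h4] at h3
      rw [mul_one_div] at h3 ⊢
      linarith
    have hloss : ∀ i ∈ Sᶜ, (∑ w ∈ D, (if w ∈ A i then 1/(((W ∩ A i).card : ℝ)) else 0)) ≤ 1 := by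
      intro i _
      rw [Finset.sum_ite, Finset.sum_const_zero, Finset.sum_const, add_zero, nsmul_eq_mul]
      by_cases ha0 : (W ∩ A i).card = 0
      · have hempty : (D.filter (fun w => w ∈ A i)) = ∅ := by
          rw [Finset.filter_eq_empty_iff]
          intro x hx hxa
          have hxm : x ∈ W ∩ A i := Finset.mem_inter.2 ⟨hDW hx, hxa⟩
          rw [Finset.card_eq_zero] at ha0
          rw [ha0] at hxm
          exact absurd hxm (Finset.notMem_empty x)
        rw [hempty]
        simp
      · have hpos : 0 < (W ∩ A i).card := Nat.pos_of_ne_zero ha0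
        have hle : (D.filter (fun w => w ∈ A i)).card ≤ (W ∩ A i).card := by
          apply Finset.card_le_card
          intro x hx
          have hx' := Finset.mem_filter.1 hx
          exact Finset.mem_inter.2 ⟨hDW hx'.1, hx'.2⟩
        rw [mul_one_div, div_le_one (by exact_mod_cast hpos)]
        exact_mod_cast hle
    have hG : (S.card:ℝ) * (((B.card:ℝ) + 1)/(ℓ:ℝ) - 1)
        ≤ ∑ i ∈ S, ∑ w ∈ D, (if w ∈ A i then (0:ℝ) else 1/(ℓ:ℝ)) := by
      calc (S.card:ℝ) * (((B.card:ℝ) + 1)/(ℓ:ℝ) - 1)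
          = ∑ _i ∈ S, (((B.card:ℝ) + 1)/(ℓ:ℝ) - 1) := by
            rw [Finset.sum_const, nsmul_eq_mul]
        _ ≤ _ := Finset.sum_le_sum hgain
    have hL : (∑ i ∈ Sᶜ, ∑ w ∈ D, (if w ∈ A i then 1/(((W ∩ A i).card : ℝ)) else 0))
        ≤ (Fintype.card N : ℝ) - (S.card : ℝ) := by
      calc (∑ i ∈ Sᶜ, ∑ w ∈ D, (if w ∈ A i then 1/(((W ∩ A i).card : ℝ)) else 0))
          ≤ ∑ _i ∈ Sᶜ, (1:ℝ) := Finset.sum_le_sum hloss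
        _ = (Sᶜ.card : ℝ) := by rw [Finset.sum_const, nsmul_eq_mul, mul_one]
        _ = (Fintype.card N : ℝ) - (S.card : ℝ) := by
            rw [Finset.card_compl]
            rw [Nat.cast_sub (Finset.card_le_univ S)]
    have hABr : (ℓ:ℝ) * (Fintype.card N : ℝ) < (S.card:ℝ) * ((B.card:ℝ) + 1) := by
      exact_mod_cast hAB
    have h5 : (Fintype.card N : ℝ) < (S.card:ℝ) * ((B.card:ℝ) + 1) / (ℓ:ℝ) := by
      rw [lt_div_iff₀ hlpos]
      linarith
    have h6 : (S.card:ℝ) * (((B.card:ℝ) + 1)/(ℓ:ℝ) - 1)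
        = (S.card:ℝ) * ((B.card:ℝ) + 1)/(ℓ:ℝ) - (S.card:ℝ) := by
      ring
    linarith
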